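/- Let d = (d_1, ..., d_n) be a degree sequence with M_k = Σ_{i=1}^n [d_i]_k (falling factorial moments), and let G be a multigraph realizing d with m_t light triple-edges, m_d light double-edges, and m_l light single loops, and no other non-simple edges. Let h be the number of heavy nodes, d_h the h-th largest degree, and L_2 = M_2 - H_2 where H_2 = Σ_{i=1}^h [d_i]_2. Then the number of light simple ordered two-stars in G (ordered triples (v_1, v_2, v_3) with v_1 light, v_1v_2 and v_1v_3 simple edges, v_2 ≠ v_3) is at least L_2 - 12·m_t·d_h - 8·m_d·d_h - m_l·d_h². -/

import Mathlib

open Finset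

/-- A multigraph on `n` nodes, given by a symmetric multiplicity function.
`mult i i` is the multiplicity of the loop at `i`. -/
structure Multigraph (n : ℕ) where
  mult : Fin n → Fin n → ℕ
  symm : ∀ i j, mult i j = mult j i

namespace Multigraph

/-- The degree of a node: a loop counts twice. -/
def deg {n : ℕ} (G : Multigraph n) (i : Fin n) : ℕ :=
  2 * G.mult i i + ∑ j ∈ Finset.univ.filter (fun j => j ≠ i), G.mult i j

/-- `i j` is a simple edge: non-loop of multiplicity exactly 1. -/
def Simple {n : ℕ} (G : Multigraph n) (i j : Fin n) : Prop :=
  i ≠ j ∧ G.mult i j = 1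

instance {n : ℕ} (G : Multigraph n) (i j : Fin n) : Decidable (G.Simple i j) :=
  inferInstanceAs (Decidable (i ≠ j ∧ G.mult i j = 1))

end Multigraph

/-- The (0-indexed) degree sequence extended to all of `ℕ` by zero. -/
def dExt (n : ℕ) (d : Fin n → ℕ) (i : ℕ) : ℕ :=
  if h : i < n then d ⟨i, h⟩ else 0

set_option maxHeartbeats 1000000 in
/-- lower bound on the number of light simple ordered two-stars. -/
theorem stmt0 (n h mt md ml : ℕ) (G : Multigraph n) (d : Fin n → ℕ)
    (hdeg : ∀ i, G.deg i = d i)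
    (hsorted : ∀ i j : Fin n, i ≤ j → d j ≤ d i)
    (hh1 : 1 ≤ h) (hhn : h ≤ n)
    -- `mt` light triple-edges (counted as ordered pairs of endpoints, hence `2 * mt`)
    (htriple : (Finset.univ.filter (fun p : Fin n × Fin n =>
        p.1 ≠ p.2 ∧ G.mult p.1 p.2 = 3 ∧ (h ≤ p.1.val ∨ h ≤ p.2.val))).card = 2 * mt)
    -- `md` light double-edges
    (hdouble : (Finset.univ.filter (fun p : Fin n × Fin n =>
        p.1 ≠ p.2 ∧ G.mult p.1 p.2 = 2 ∧ (h ≤ p.1.val ∨ h ≤ p.2.val))).card = 2 * md)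
    -- `ml` light single loops
    (hloop : (Finset.univ.filter (fun i : Fin n =>
        G.mult i i = 1 ∧ h ≤ i.val)).card = ml)
    -- no other non-simple edges
    (hmax : ∀ i j : Fin n, i ≠ j → G.mult i j ≤ 3)
    (hmultilight : ∀ i j : Fin n, i ≠ j → 2 ≤ G.mult i j → (h ≤ i.val ∨ h ≤ j.val))
    (hloopmax : ∀ i : Fin n, G.mult i i ≤ 1)
    (hlooplight : ∀ i : Fin n, G.mult i i = 1 → h ≤ i.val) :
    ((∑ i ∈ Finset.univ.filter (fun i : Fin n => h ≤ i.val),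
        Nat.descFactorial (d i) 2 : ℕ) : ℤ)
      - 12 * (mt : ℤ) * (dExt n d (h - 1) : ℤ)
      - 8 * (md : ℤ) * (dExt n d (h - 1) : ℤ)
      - (ml : ℤ) * (dExt n d (h - 1) : ℤ) ^ 2
    ≤ ((Finset.univ.filter (fun t : Fin n × Fin n × Fin n =>
        h ≤ t.1.val ∧ t.2.1 ≠ t.2.2 ∧ G.Simple t.1 t.2.1 ∧ G.Simple t.1 t.2.2)).card : ℤ) := by
  classical
  have hhn' : h - 1 < n := by omega
  have hDval : dExt n d (h - 1) = d ⟨h - 1, hhn'⟩ := by simp [dExt, hhn']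
  set D : ℤ := (dExt n d (h - 1) : ℤ) with hD
  have hD0 : 0 ≤ D := by positivity
  set light : Finset (Fin n) := Finset.univ.filter (fun i : Fin n => h ≤ i.val) with hlight
  set S : Fin n → Finset (Fin n) := fun i => Finset.univ.filter (fun j => G.Simple i j) with hS
  set sF : Fin n → ℕ := fun i => (S i).card with hsF
  set tF : Fin n → ℕ := fun i =>
    (Finset.univ.filter (fun j => j ≠ i ∧ G.mult i j = 3)).card with htF
  set bF : Fin n → ℕ := fun i =>
    (Finset.univ.filter (fun j => j ≠ i ∧ G.mult i j = 2)).card with hbF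
  -- degree bound for light nodes
  have hdle : ∀ i ∈ light, (d i : ℤ) ≤ D := by
    intro i hi
    rw [hlight, Finset.mem_filter] at hi
    rw [hD, hDval]
    exact_mod_cast hsorted ⟨h - 1, hhn'⟩ i (by rw [Fin.le_def]; simp; omega)
  -- degree decomposition
  have hdecomp : ∀ i : Fin n, d i = sF i + 3 * tF i + 2 * bF i + 2 * G.mult i i := by
    intro i
    rw [← hdeg i, Multigraph.deg]
    have h1 : ∀ j ∈ Finset.univ.filter (fun j : Fin n => j ≠ i), G.mult i j
        = (if j ≠ i ∧ G.mult i j = 1 then 1 else 0)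
          + 2 * (if j ≠ i ∧ G.mult i j = 2 then 1 else 0)
          + 3 * (if j ≠ i ∧ G.mult i j = 3 then 1 else 0) := by
      intro j hj
      have hji : j ≠ i := by simpa using hj
      have := hmax i j (Ne.symm hji)
      interval_cases (G.mult i j) <;> simp [hji]
    rw [Finset.sum_congr rfl h1]
    simp only [Finset.sum_add_distrib, ← Finset.mul_sum, Finset.sum_boole]
    have e1 : Finset.filter (fun j : Fin n => j ≠ i ∧ G.mult i j = 1)
        (Finset.filter (fun j : Fin n => j ≠ i) Finset.univ) = S i := by
      rw [hS]; ext j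
      simp only [Finset.mem_filter, Finset.mem_univ, true_and]
      simp only [Multigraph.Simple]
      constructor
      · rintro ⟨hj, -, hm⟩; exact ⟨Ne.symm hj, hm⟩
      · rintro ⟨hj, hm⟩; exact ⟨Ne.symm hj, Ne.symm hj, hm⟩
    have e3 : Finset.filter (fun j : Fin n => j ≠ i ∧ G.mult i j = 3)
        (Finset.filter (fun j : Fin n => j ≠ i) Finset.univ)
        = Finset.univ.filter (fun j : Fin n => j ≠ i ∧ G.mult i j = 3) := by
      ext j; simp only [Finset.mem_filter, Finset.mem_univ, true_and]; tauto
    have e2 : Finset.filter (fun j : Fin n => j ≠ i ∧ G.mult i j = 2)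
        (Finset.filter (fun j : Fin n => j ≠ i) Finset.univ)
        = Finset.univ.filter (fun j : Fin n => j ≠ i ∧ G.mult i j = 2) := by
      ext j; simp only [Finset.mem_filter, Finset.mem_univ, true_and]; tauto
    rw [e1, e2, e3, hsF, htF, hbF]
    simp only [Nat.cast_id]
    ring
  -- counting two-stars
  have hkey : (Finset.univ.filter (fun t : Fin n × Fin n × Fin n =>
        h ≤ t.1.val ∧ t.2.1 ≠ t.2.2 ∧ G.Simple t.1 t.2.1 ∧ G.Simple t.1 t.2.2)).card
      = ∑ i ∈ light, (sF i * sF i - sF i) := by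
    rw [Finset.card_filter, Fintype.sum_prod_type, hlight, Finset.sum_filter]
    refine (Finset.sum_congr rfl fun i _ => ?_).symm
    by_cases hi : h ≤ i.val
    · rw [if_pos hi]
      have hset : (Finset.univ.filter (fun q : Fin n × Fin n =>
          q.1 ≠ q.2 ∧ G.Simple i q.1 ∧ G.Simple i q.2)) = (S i).offDiag := by
        ext q
        simp only [Finset.mem_filter, Finset.mem_univ, true_and, Finset.mem_offDiag, hS]
        tauto
      calc sF i * sF i - sF i = (S i).offDiag.card := (Finset.offDiag_card _).symm
        _ = (Finset.univ.filter (fun q : Fin n × Fin n =>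
              q.1 ≠ q.2 ∧ G.Simple i q.1 ∧ G.Simple i q.2)).card := by rw [hset]
        _ = ∑ q : Fin n × Fin n,
              if h ≤ i.val ∧ q.1 ≠ q.2 ∧ G.Simple i q.1 ∧ G.Simple i q.2 then 1 else 0 := by
            rw [Finset.card_filter]
            exact Finset.sum_congr rfl fun q _ => by simp [hi]
    · rw [if_neg hi]
      exact (Finset.sum_eq_zero fun q _ => by simp [hi]).symm
  -- bounds on the numbers of multi-edges at light nodes
  have hT : ∑ i ∈ light, tF i ≤ 2 * mt := by
    have hc : ∑ i ∈ light, tF i = (Finset.univ.filter (fun p : Fin n × Fin n =>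
        h ≤ p.1.val ∧ p.2 ≠ p.1 ∧ G.mult p.1 p.2 = 3)).card := by
      rw [hlight, Finset.sum_filter, Finset.card_filter, Fintype.sum_prod_type]
      refine Finset.sum_congr rfl fun i _ => ?_
      by_cases hi : h ≤ i.val
      · rw [if_pos hi]
        simp only [htF]
        rw [Finset.card_filter]
        exact Finset.sum_congr rfl fun j _ => by simp [hi]
      · rw [if_neg hi]
        exact (Finset.sum_eq_zero fun j _ => by simp [hi]).symm
    rw [hc, ← htriple]
    apply Finset.card_le_card
    intro p hp
    simp only [Finset.mem_filter, Finset.mem_univ, true_and] at hp ⊢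
    exact ⟨Ne.symm hp.2.1, hp.2.2, Or.inl hp.1⟩
  have hB : ∑ i ∈ light, bF i ≤ 2 * md := by
    have hc : ∑ i ∈ light, bF i = (Finset.univ.filter (fun p : Fin n × Fin n =>
        h ≤ p.1.val ∧ p.2 ≠ p.1 ∧ G.mult p.1 p.2 = 2)).card := by
      rw [hlight, Finset.sum_filter, Finset.card_filter, Fintype.sum_prod_type]
      refine Finset.sum_congr rfl fun i _ => ?_
      by_cases hi : h ≤ i.val
      · rw [if_pos hi]
        simp only [hbF]
        rw [Finset.card_filter]
        exact Finset.sum_congr rfl fun j _ => by simp [hi]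
      · rw [if_neg hi]
        exact (Finset.sum_eq_zero fun j _ => by simp [hi]).symm
    rw [hc, ← hdouble]
    apply Finset.card_le_card
    intro p hp
    simp only [Finset.mem_filter, Finset.mem_univ, true_and] at hp ⊢
    exact ⟨Ne.symm hp.2.1, hp.2.2, Or.inl hp.1⟩
  have hL : ∑ i ∈ light, G.mult i i = ml := by
    rw [← hloop]
    have h1 : ∀ i ∈ light, G.mult i i = if G.mult i i = 1 then 1 else 0 := by
      intro i _
      have := hloopmax i
      interval_cases (G.mult i i) <;> norm_num
    rw [Finset.sum_congr rfl h1, Finset.sum_boole, hlight, Finset.filter_filter]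
    simp only [Nat.cast_id]
    congr 1
    ext i
    simp only [Finset.mem_filter, Finset.mem_univ, true_and]
    tauto
  clear_value D light S sF tF bF
  -- cast helpers
  have hdf : ∀ m : ℕ, ((Nat.descFactorial m 2 : ℕ) : ℤ) = m * (m - 1) := by
    intro m
    cases m with
    | zero => simp
    | succ k => simp [Nat.descFactorial]; ring
  have hsq : ∀ m : ℕ, ((m * m - m : ℕ) : ℤ) = (m : ℤ) * m - m := by
    intro m
    rcases Nat.eq_zero_or_pos m with rfl | hm
    · simp
    · rw [Nat.cast_sub (Nat.le_mul_of_pos_left m hm)]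
      push_cast
      ring
  -- per-node inequality
  have hnode : ∀ i ∈ light, ((Nat.descFactorial (d i) 2 : ℕ) : ℤ)
      ≤ ((sF i * sF i - sF i : ℕ) : ℤ) + 6 * tF i * D + 4 * bF i * D + G.mult i i * D ^ 2 := by
    intro i hi
    rw [hdf, hsq]
    have hdl := hdle i hi
    have hl := hloopmax i
    have hde' : (d i : ℤ) = sF i + 3 * tF i + 2 * bF i + 2 * G.mult i i := by
      exact_mod_cast hdecomp i
    have hs0 : (0:ℤ) ≤ (sF i : ℤ) := Int.natCast_nonneg _
    have ht0 : (0:ℤ) ≤ (tF i : ℤ) := Int.natCast_nonneg _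
    have hb0 : (0:ℤ) ≤ (bF i : ℤ) := Int.natCast_nonneg _
    have hl' : G.mult i i = 0 ∨ G.mult i i = 1 := by omega
    rcases hl' with hl1 | hl1 <;>
      rw [hl1] at hde' ⊢ <;> push_cast at hde' ⊢ <;> rw [hde'] at hdl ⊢
    · nlinarith [mul_nonneg (show (0:ℤ) ≤ 3 * tF i + 2 * bF i by linarith)
          (show (0:ℤ) ≤ D - (sF i + 3 * tF i + 2 * bF i) by linarith),
        mul_nonneg (show (0:ℤ) ≤ 3 * tF i + 2 * bF i by linarith)
          (show (0:ℤ) ≤ D - sF i by linarith)]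
    · nlinarith [mul_nonneg (show (0:ℤ) ≤ 3 * tF i + 2 * bF i + 2 by linarith)
          (show (0:ℤ) ≤ D - (sF i + 3 * tF i + 2 * bF i + 2) by linarith),
        mul_nonneg (show (0:ℤ) ≤ 3 * tF i + 2 * bF i by linarith)
          (show (0:ℤ) ≤ 3 * tF i + 2 * bF i + 5 by linarith),
        sq_nonneg (D - 2)]
  -- assemble
  have e := Finset.sum_le_sum hnode
  rw [Finset.sum_add_distrib, Finset.sum_add_distrib, Finset.sum_add_distrib,
    ← Finset.sum_mul, ← Finset.sum_mul, ← Finset.sum_mul,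
    ← Finset.mul_sum, ← Finset.mul_sum] at e
  have hTz : (∑ i ∈ light, (tF i : ℤ)) ≤ 2 * mt := by exact_mod_cast hT
  have hBz : (∑ i ∈ light, (bF i : ℤ)) ≤ 2 * md := by exact_mod_cast hB
  have hLz : (∑ i ∈ light, (G.mult i i : ℤ)) = ml := by exact_mod_cast hL
  have h6 : 6 * (∑ i ∈ light, (tF i : ℤ)) * D ≤ 12 * mt * D := by
    have := mul_le_mul_of_nonneg_right hTz hD0
    nlinarith
  have h8 : 4 * (∑ i ∈ light, (bF i : ℤ)) * D ≤ 8 * md * D := by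
    have := mul_le_mul_of_nonneg_right hBz hD0
    nlinarith
  rw [hkey]
  push_cast at e ⊢
  rw [hLz] at e
  linarith [e, h6, h8]
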